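/- For any γ ∈ (0,1) and any positive integer T, the sum ∑_{t=1}^T 1/(1-γ^t) is at most 1/(1-γ) + T - 1 + log(1-γ)/log(γ). -/

import Mathlib

theorem sum_inv_one_sub_pow_le (γ : ℝ) (hγ0 : 0 < γ) (hγ1 : γ < 1) (T : ℕ) (hT : 1 ≤ T) :
    ∑ t ∈ Finset.Icc 1 T, 1 / (1 - γ ^ t) ≤
      1 / (1 - γ) + (T : ℝ) - 1 + Real.log (1 - γ) / Real.log γ := by
  have hlogγ : Real.log γ < 0 := Real.log_neg hγ0 hγ1
  have hlogne : Real.log γ ≠ 0 := ne_of_lt hlogγ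
  have hpow : ∀ n : ℕ, 1 ≤ n → γ ^ n < 1 := by
    intro n hn
    calc γ ^ n ≤ γ ^ 1 := pow_le_pow_of_le_one hγ0.le hγ1.le hn
    _ = γ := pow_one γ
    _ < 1 := hγ1
  have key : ∀ n : ℕ, 1 ≤ n → 1 / (1 - γ ^ (n+1)) ≤
      1 - (Real.log (1 - γ ^ (n+1)) - Real.log (1 - γ ^ n)) / Real.log γ := by
    intro n hn
    set a := γ ^ n with ha
    set b := γ ^ (n+1) with hb
    have hb0 : 0 < b := pow_pos hγ0 _
    have ha0 : 0 < a := pow_pos hγ0 _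
    have ha1 : a < 1 := hpow n hn
    have hb1 : b < 1 := hpow _ (by omega)
    have hba : b = a * γ := by rw [ha, hb, pow_succ]
    have h1b : 0 < 1 - b := by linarith
    have h1a : 0 < 1 - a := by linarith
    set L := Real.log (1 - b) - Real.log (1 - a) with hL
    -- Step A : b * (-log γ) ≤ a - b
    have hA : b * (-Real.log γ) ≤ a - b := by
      have h := Real.log_le_sub_one_of_pos (x := γ⁻¹) (by positivity)
      rw [Real.log_inv] at h
      have heq : b * (γ⁻¹ - 1) = a - b := by
        rw [hba]; field_simp
      nlinarith
    -- Step B : a - b ≤ L * (1 - b)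
    have hB : a - b ≤ L * (1 - b) := by
      have h := Real.log_le_sub_one_of_pos (x := (1-a)/(1-b)) (by positivity)
      rw [Real.log_div (by linarith) (by linarith)] at h
      have h2 : (1-a)/(1-b) - 1 = (b - a)/(1-b) := by field_simp; ring
      rw [h2] at h
      have h3 := mul_le_mul_of_nonneg_right h h1b.le
      rw [div_mul_cancel₀ _ (ne_of_gt h1b)] at h3
      nlinarith
    have hchain : b * (-Real.log γ) ≤ L * (1 - b) := hA.trans hB
    have hdiv : b / (1 - b) ≤ L / (-Real.log γ) :=
      (div_le_div_iff₀ h1b (by linarith)).mpr hchain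
    rw [div_neg] at hdiv
    have hone : 1 / (1 - b) = 1 + b / (1 - b) := by field_simp; ring
    linarith
  have main : ∀ S : ℕ, 1 ≤ S → ∑ t ∈ Finset.Icc 1 S, 1 / (1 - γ ^ t) ≤
      1 / (1 - γ) + (S : ℝ) - 1 + (Real.log (1 - γ) - Real.log (1 - γ ^ S)) / Real.log γ := by
    intro S hS
    induction S with
    | zero => omega
    | succ n ih =>
      rcases Nat.lt_or_ge 1 (n + 1) with h1 | h1
      · have hn : 1 ≤ n := by omega
        rw [Finset.sum_Icc_succ_top (by omega : 1 ≤ n+1)]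
        have hkey := key n hn
        have hih := ih hn
        rw [sub_div] at hkey hih ⊢
        push_cast
        linarith
      · have hn : n = 0 := by omega
        subst hn
        simp [pow_one]
  have hfin := main T hT
  have hpos : 0 < 1 - γ ^ T := by linarith [hpow T hT]
  have hlog : Real.log (1 - γ ^ T) ≤ 0 :=
    Real.log_nonpos (by linarith) (by nlinarith [pow_pos hγ0 T])
  have : - Real.log (1 - γ ^ T) / Real.log γ ≤ 0 := by
    apply div_nonpos_of_nonneg_of_nonpos (by linarith) hlogγ.le
  rw [sub_div] at hfin
  rw [neg_div] at this
  linarith
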